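/- Suppose F ∈ C²(ℝ) is bounded from below, and there exist C₃ > 0, C₄ ≥ 0 and r ∈ (1,2] such that |F'(s)|^r ≤ C₃|F(s)| + C₄ for all s ∈ ℝ. Then F has polynomial growth of order r' = r/(r-1): there exist constants C₅, C₆ ≥ 0 such that |F(s)| ≤ C₅|s|^{r'} + C₆ for all s ∈ ℝ. -/

import Mathlib

/-- If `F ∈ C²(ℝ)` is bounded below and `|F'(s)|^r ≤ C₃|F(s)| + C₄` for some
`C₃ > 0`, `C₄ ≥ 0`, `r ∈ (1,2]`, then `F` has polynomial growth of order
`r' = r/(r-1)`: there exist `C₅, C₆ ≥ 0` with `|F(s)| ≤ C₅|s|^{r'} + C₆`. -/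
theorem stmt5 (F : ℝ → ℝ) (hF : ContDiff ℝ 2 F) (hbdd : BddBelow (Set.range F))
    (C₃ C₄ r : ℝ) (hC₃ : 0 < C₃) (hC₄ : 0 ≤ C₄) (hr : r ∈ Set.Ioc (1 : ℝ) 2)
    (hgrowth : ∀ s : ℝ, |deriv F s| ^ r ≤ C₃ * |F s| + C₄) :
    ∃ C₅ C₆ : ℝ, 0 ≤ C₅ ∧ 0 ≤ C₆ ∧ ∀ s : ℝ, |F s| ≤ C₅ * |s| ^ (r / (r - 1)) + C₆ := by
  obtain ⟨hr1, hr2⟩ := hr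
  have hrpos : (0 : ℝ) < r := by linarith
  obtain ⟨m, hm⟩ := hbdd
  have hmF : ∀ s, m ≤ F s := fun s => hm (Set.mem_range_self s)
  set G : ℝ → ℝ := fun s => F s - m + 1 with hGdef
  have hG1 : ∀ s, 1 ≤ G s := fun s => by simp only [hGdef]; linarith [hmF s]
  have hGpos : ∀ s, 0 < G s := fun s => lt_of_lt_of_le one_pos (hG1 s)
  have hdF : Differentiable ℝ F := hF.differentiable (by norm_num)
  have hFabs : ∀ s, |F s| ≤ G s + |m| := by
    intro s
    rcases abs_cases (F s) with ⟨h, _⟩ | ⟨h, _⟩ <;> rcases abs_cases m with ⟨h', _⟩ | ⟨h', _⟩ <;>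
      simp only [hGdef] <;> nlinarith [hmF s]
  set A : ℝ := C₃ + C₃ * |m| + C₄ + 1 with hAdef
  have hA1 : 1 ≤ A := by have := abs_nonneg m; nlinarith
  have hA0 : 0 < A := lt_of_lt_of_le one_pos hA1
  -- pointwise bound on the derivative
  have hderiv_bound : ∀ s, |deriv F s| ≤ A * G s ^ (1 / r) := by
    intro s
    have h1 : |deriv F s| ^ r ≤ A * G s := by
      have h2 : C₃ * |F s| + C₄ ≤ A * G s := by
        have h3 : C₃ * |F s| ≤ C₃ * (G s + |m|) :=
          mul_le_mul_of_nonneg_left (hFabs s) hC₃.le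
        have h4 : C₃ * |m| + C₄ ≤ (C₃ * |m| + C₄) * G s := by
          have hnn : (0:ℝ) ≤ C₃ * |m| + C₄ := by positivity
          have := mul_le_mul_of_nonneg_left (hG1 s) hnn
          linarith
        nlinarith [hG1 s]
      exact le_trans (hgrowth s) h2
    have h5 : |deriv F s| = (|deriv F s| ^ r) ^ r⁻¹ :=
      (Real.rpow_rpow_inv (abs_nonneg _) hrpos.ne').symm
    rw [h5, one_div]
    calc (|deriv F s| ^ r) ^ r⁻¹ ≤ (A * G s) ^ r⁻¹ := by
          apply Real.rpow_le_rpow (Real.rpow_nonneg (abs_nonneg _) r) h1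
          positivity
      _ = A ^ r⁻¹ * G s ^ r⁻¹ := Real.mul_rpow hA0.le (hGpos s).le
      _ ≤ A * G s ^ r⁻¹ := by
          apply mul_le_mul_of_nonneg_right _ (Real.rpow_nonneg (hGpos s).le _)
          calc A ^ r⁻¹ ≤ A ^ (1:ℝ) := by
                apply Real.rpow_le_rpow_of_exponent_le hA1
                rw [inv_le_one_iff₀]; right; linarith
            _ = A := Real.rpow_one A
  set p : ℝ := (r - 1) / r with hpdef
  have hp0 : 0 < p := div_pos (by linarith) hrpos
  have hp1 : p ≤ 1 := by rw [hpdef, div_le_one hrpos]; linarith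
  set φ : ℝ → ℝ := fun s => G s ^ p with hφdef
  have hGderiv : ∀ s, HasDerivAt G (deriv F s) s := by
    intro s
    exact (((hdF s).hasDerivAt.sub_const m).add_const 1)
  have hφderiv : ∀ s, HasDerivAt φ (deriv F s * p * G s ^ (p - 1)) s := fun s =>
    (hGderiv s).rpow_const (Or.inl (hGpos s).ne')
  set K : ℝ := p * A with hKdef
  have hK0 : 0 ≤ K := by positivity
  have hφbound : ∀ s, |deriv F s * p * G s ^ (p - 1)| ≤ K := by
    intro s
    rw [abs_mul, abs_mul, abs_of_pos hp0,
      abs_of_pos (Real.rpow_pos_of_pos (hGpos s) _)]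
    calc |deriv F s| * p * G s ^ (p - 1)
        ≤ (A * G s ^ (1 / r)) * p * G s ^ (p - 1) := by
          apply mul_le_mul_of_nonneg_right
            (mul_le_mul_of_nonneg_right (hderiv_bound s) hp0.le)
          exact (Real.rpow_pos_of_pos (hGpos s) _).le
      _ = p * A * (G s ^ (1 / r) * G s ^ (p - 1)) := by ring
      _ = K := by
          rw [← Real.rpow_add (hGpos s)]
          have : 1 / r + (p - 1) = 0 := by
            rw [hpdef]; field_simp; ring
          rw [this, Real.rpow_zero, mul_one, hKdef]
  have hMVT : ∀ s : ℝ, |φ s - φ 0| ≤ K * |s| := by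
    intro s
    have := convex_univ.norm_image_sub_le_of_norm_hasDerivWithin_le
      (f := φ) (f' := fun s => deriv F s * p * G s ^ (p - 1)) (s := Set.univ)
      (fun x _ => (hφderiv x).hasDerivWithinAt)
      (fun x _ => hφbound x) (Set.mem_univ 0) (Set.mem_univ s)
    simpa using this
  have hφ_le : ∀ s, φ s ≤ φ 0 + K * |s| := by
    intro s
    have := hMVT s
    have h := abs_le.mp this
    linarith [h.1, h.2]
  have hφ0 : 0 ≤ φ 0 := Real.rpow_nonneg (hGpos 0).le _
  set q : ℝ := r / (r - 1) with hqdef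
  have hq : q = p⁻¹ := by rw [hqdef, hpdef, inv_div]
  have hq1 : 1 ≤ q := by
    rw [hqdef, le_div_iff₀ (by linarith : (0:ℝ) < r - 1)]; linarith
  have hq0 : 0 < q := lt_of_lt_of_le one_pos hq1
  have hG_le : ∀ s, G s ≤ (φ 0 + K * |s|) ^ q := by
    intro s
    have h1 : G s = (φ s) ^ q := by
      rw [hq, hφdef]
      exact (Real.rpow_rpow_inv (hGpos s).le hp0.ne').symm
    rw [h1]
    exact Real.rpow_le_rpow (Real.rpow_nonneg (hGpos s).le _) (hφ_le s) hq0.le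
  -- split the power of a sum
  have hsplit : ∀ a b : ℝ, 0 ≤ a → 0 ≤ b →
      (a + b) ^ q ≤ 2 ^ q * (a ^ q + b ^ q) := by
    intro a b ha hb
    have h1 : a + b ≤ 2 * max a b := by
      rcases le_total a b with h | h
      · simp [max_eq_right h]; linarith
      · simp [max_eq_left h]; linarith
    calc (a + b) ^ q ≤ (2 * max a b) ^ q :=
          Real.rpow_le_rpow (by linarith) h1 hq0.le
      _ = 2 ^ q * (max a b) ^ q :=
          Real.mul_rpow (by norm_num) (le_max_of_le_left ha)
      _ ≤ 2 ^ q * (a ^ q + b ^ q) := by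
          apply mul_le_mul_of_nonneg_left _ (Real.rpow_nonneg (by norm_num) _)
          rcases le_total a b with h | h
          · rw [max_eq_right h]
            nlinarith [Real.rpow_nonneg ha q]
          · rw [max_eq_left h]
            nlinarith [Real.rpow_nonneg hb q]
  refine ⟨2 ^ q * K ^ q, 2 ^ q * (φ 0) ^ q + |m|, by positivity, by positivity, ?_⟩
  intro s
  have h1 : |F s| ≤ G s + |m| := hFabs s
  have h2 : G s ≤ 2 ^ q * ((φ 0) ^ q + (K * |s|) ^ q) :=
    le_trans (hG_le s) (hsplit _ _ hφ0 (by positivity))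
  have h3 : (K * |s|) ^ q = K ^ q * |s| ^ q := Real.mul_rpow hK0 (abs_nonneg s)
  rw [h3] at h2
  calc |F s| ≤ G s + |m| := h1
    _ ≤ 2 ^ q * ((φ 0) ^ q + K ^ q * |s| ^ q) + |m| := by linarith
    _ = 2 ^ q * K ^ q * |s| ^ q + (2 ^ q * (φ 0) ^ q + |m|) := by ring
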